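/- Consider the game K¹ on ℕ² with Wythoff moves (from (x,y) one may move to (x-n,y), (x,y-n), or (x-n,y-n) for n > 0, staying in ℕ²), where positions (x,y) with x + y ≤ 1 are terminal (no moves allowed from them, and they are P-positions by convention being losing for the mover). Then a position (a,b) with a ≤ b and a + b ≥ 2 is a P-position if and only if the Zeckendorf (Fibonacci) representation of a ends in 0 and rep_F(b) = rep_F(a)·1, i.e., b is obtained from a by shifting the Zeckendorf representation left and adding 1. -/

import Mathlib

/-- Value of a list of Fibonacci digits, least significant digit first,
    digit `i` having weight `F_i` where `F_0 = 1, F_1 = 2, F_{k+2}=F_{k+1}+F_k`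
    (i.e. `F_i = fib (i+2)` for Mathlib's `Nat.fib`). -/
def zvalAux : ℕ → List Bool → ℕ
  | _, [] => 0
  | k, d :: L => (if d then Nat.fib k else 0) + zvalAux (k + 1) L

def zval (L : List Bool) : ℕ := zvalAux 2 L

/-- `ZeckRep n L` : `L` (least significant digit first) is the Zeckendorf
    (greedy Fibonacci) representation of `n`: correct value, no two adjacent
    `1`s, and nonzero leading (most significant) digit. -/
def ZeckRep (n : ℕ) (L : List Bool) : Prop :=
  zval L = n ∧ List.Chain' (fun x y => ¬(x = true ∧ y = true)) L ∧
    L.getLast? ≠ some false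

/-- A move of the game `K¹`: a Wythoff move from a non-terminal position
    (a position `(x,y)` with `x + y > 1`). -/
def K1Move (p q : ℕ × ℕ) : Prop :=
  1 < p.1 + p.2 ∧
  ((q.1 = p.1 ∧ q.2 < p.2) ∨ (q.1 < p.1 ∧ q.2 = p.2) ∨
   (q.1 < p.1 ∧ q.2 < p.2 ∧ p.1 - q.1 = p.2 - q.2))

/-- Characterization of the P-positions of `K¹` (given by the unique stable and
    absorbing set for its move relation): a non-terminal position `(a,b)` with
    `a ≤ b` is a P-position iff `rep_F a` ends in `0` and
    `rep_F b = rep_F a · 1`. -/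
lemma zvalAux_nil (k : ℕ) : zvalAux k [] = 0 := rfl

lemma zvalAux_cons (k : ℕ) (d : Bool) (L : List Bool) :
    zvalAux k (d :: L) = (if d then Nat.fib k else 0) + zvalAux (k + 1) L := rfl

lemma zvalAux_append (M L : List Bool) : ∀ k,
    zvalAux k (M ++ L) = zvalAux k M + zvalAux (k + M.length) L := by
  induction M with
  | nil => intro k; simp [zvalAux]
  | cons d M ih =>
      intro k
      have : k + (M.length + 1) = k + 1 + M.length := by omega
      simp only [List.cons_append, zvalAux_cons, ih (k+1), List.length_cons, this]
      omega

lemma zvalAux_replicate_false (j k : ℕ) : zvalAux k (List.replicate j false) = 0 := by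
  induction j generalizing k with
  | zero => rfl
  | succ j ih => simp [List.replicate_succ, zvalAux_cons, ih]

lemma zvalAux_step (L : List Bool) : ∀ k, zvalAux (k+2) L = zvalAux (k+1) L + zvalAux k L := by
  induction L with
  | nil => intro k; simp [zvalAux]
  | cons d T ih =>
      intro k
      simp only [zvalAux_cons, ih (k+1)]
      rcases d with _ | _
      · simp
      · simp [Nat.fib_add_two]; omega

def GoodChain (L : List Bool) : Prop :=
  List.Chain' (fun x y => ¬(x = true ∧ y = true)) L

lemma zval_lower : ∀ (L : List Bool), L.getLast? = some true → ∀ k,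
    Nat.fib (k + L.length + 1) ≤ zvalAux (k + 2) L := by
  intro L
  induction L with
  | nil => intro h; simp at h
  | cons d T ih =>
      intro h k
      rcases T with _ | ⟨e, T'⟩
      · simp at h
        subst h
        simp [zvalAux]
      · have hT : (e :: T').getLast? = some true := by
          rwa [List.getLast?_cons_cons] at h
        have H := ih hT (k + 1)
        rw [show k+1+2 = k+3 by omega] at H
        rw [show k + 1 + (e :: T').length + 1 = k + (d :: e :: T').length + 1 by
          simp; omega] at H
        rw [zvalAux_cons, show k+2+1 = k+3 by omega]
        omega

lemma zval_upper : ∀ (L : List Bool), GoodChain L → ∀ k,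
    zvalAux (k + 2) L + Nat.fib (k + 1) ≤ Nat.fib (k + 2 + L.length)
  | [], _, k => by simpa [zvalAux] using Nat.fib_le_fib_succ (n := k + 1)
  | false :: T, h, k => by
      have hT : GoodChain T := (List.isChain_cons.mp h).2
      have H := zval_upper T hT (k + 1)
      rw [show k+1+2 = k+3 by omega, show k+1+2+T.length = k+2+(false::T).length by
        simp; omega, show k+1+1 = k+2 by omega] at H
      have h1 : Nat.fib (k+1) ≤ Nat.fib (k+2) := Nat.fib_le_fib_succ
      rw [zvalAux_cons, if_neg (by simp), show k+2+1 = k+3 by omega]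
      omega
  | [true], _, k => by
      rw [zvalAux_cons, if_pos rfl]
      have e3 : Nat.fib (k+2+[true].length) = Nat.fib (k+2) + Nat.fib (k+1) := by
        rw [show k+2+[true].length = k+1+2 by simp, Nat.fib_add_two,
          show k+1+1 = k+2 by omega]
        omega
      simp only [zvalAux_nil]
      omega
  | true :: e :: T, h, k => by
      have he : e = false := by
        have := List.isChain_cons_cons.mp h
        rcases e with _|_
        · rfl
        · exact absurd ⟨rfl, rfl⟩ this.1
      subst he
      have hT : GoodChain T := ((List.isChain_cons.mp (List.isChain_cons.mp h).2).2)
      have H := zval_upper T hT (k + 2)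
      rw [show k+2+2 = k+4 by omega, show k+2+2+T.length = k+2+(true::false::T).length by
        simp; omega, show k+2+1 = k+3 by omega] at H
      rw [zvalAux_cons, if_pos rfl, zvalAux_cons, if_neg (by simp),
        show k+2+1 = k+3 by omega, show k+3+1 = k+4 by omega]
      have e3 : Nat.fib (k+3) = Nat.fib (k+2) + Nat.fib (k+1) := by
        rw [show k+3 = k+1+2 by omega, Nat.fib_add_two, show k+1+1 = k+2 by omega]; omega
      omega

lemma getLast?_true_of (L : List Bool) (hne : L ≠ []) (h : L.getLast? ≠ some false) :
    L.getLast? = some true := by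
  have := List.getLast?_eq_getLast hne
  rcases hb : L.getLast hne with _ | _
  · rw [this, hb] at h ⊢; exact absurd rfl h
  · rw [this, hb]

lemma strip : ∀ M : List Bool, GoodChain M →
    ∃ S j, M = S ++ List.replicate j false ∧ GoodChain S ∧ S.getLast? ≠ some false := by
  intro M
  induction M using List.reverseRecOn with
  | nil => exact fun _ => ⟨[], 0, by simp, List.isChain_nil, by simp⟩
  | append_singleton N b ih =>
      intro h
      have hN : GoodChain N := (List.isChain_append.mp h).1
      rcases b with _ | _
      · obtain ⟨S, j, hEq, hcS, heS⟩ := ih hN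
        refine ⟨S, j + 1, ?_, hcS, heS⟩
        rw [hEq, List.replicate_succ', ← List.append_assoc]
      · exact ⟨N ++ [true], 0, by simp, h, by simp [List.getLast?_concat]⟩

lemma decomp (L : List Bool) (h : L.getLast? = some true) :
    ∃ M, L = M ++ [true] := by
  have hne : L ≠ [] := by intro e; simp [e] at h
  refine ⟨L.dropLast, ?_⟩
  have h2 := List.dropLast_append_getLast hne
  have h3 : L.getLast hne = true := by
    have := List.getLast?_eq_getLast hne
    rw [this] at h; exact Option.some_injective _ h.symm ▸ rfl
  rw [← h3]; exact h2.symm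

lemma lt_of_len_lt (k : ℕ) (L L' : List Bool) (hL : GoodChain L)
    (h' : L'.getLast? = some true) (hlen : L.length < L'.length) :
    zvalAux (k+2) L < zvalAux (k+2) L' := by
  have hu := zval_upper L hL k
  have hl := zval_lower L' h' k
  have hmono : Nat.fib (k+2+L.length) ≤ Nat.fib (k + L'.length + 1) :=
    Nat.fib_mono (by omega)
  have hpos : 0 < Nat.fib (k+1) := Nat.fib_pos.mpr (by omega)
  omega

lemma zvalAux_strip (k : ℕ) (S : List Bool) (j : ℕ) :
    zvalAux k (S ++ List.replicate j false) = zvalAux k S := by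
  rw [zvalAux_append, zvalAux_replicate_false]; omega

lemma goodchain_of_append_left {M L : List Bool}
    (h : GoodChain (M ++ L)) : GoodChain M := (List.isChain_append.mp h).1

lemma pos_of_last_true (k : ℕ) (L : List Bool) (h : L.getLast? = some true) :
    0 < zvalAux (k+2) L := by
  have := zval_lower L h k
  have : 0 < Nat.fib (k + L.length + 1) := Nat.fib_pos.mpr (by omega)
  omega

lemma rep_unique : ∀ N : ℕ, ∀ L L' : List Bool, L.length ≤ N → L'.length ≤ N →
    GoodChain L → L.getLast? ≠ some false → GoodChain L' → L'.getLast? ≠ some false →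
    ∀ k, zvalAux (k+2) L = zvalAux (k+2) L' → L = L' := by
  intro N
  induction N with
  | zero =>
      intro L L' h1 h2 _ _ _ _ _ _
      rw [List.length_eq_zero_iff.mp (Nat.le_zero.mp h1),
        List.length_eq_zero_iff.mp (Nat.le_zero.mp h2)]
  | succ N ih =>
      intro L L' hl1 hl2 hc1 he1 hc2 he2 k hv
      by_cases hL : L = []
      · subst hL
        by_cases hL' : L' = []
        · rw [hL']
        · have ht2 := getLast?_true_of L' hL' he2
          have := pos_of_last_true k L' ht2
          simp [zvalAux_nil] at hv
          omega
      · by_cases hL' : L' = []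
        · subst hL'
          have ht1 := getLast?_true_of L hL he1
          have := pos_of_last_true k L ht1
          simp [zvalAux_nil] at hv
          omega
        · have ht1 := getLast?_true_of L hL he1
          have ht2 := getLast?_true_of L' hL' he2
          rcases lt_trichotomy L.length L'.length with hlt | heq | hgt
          · have := lt_of_len_lt k L L' hc1 ht2 hlt; omega
          · obtain ⟨M, rfl⟩ := decomp L ht1
            obtain ⟨M', rfl⟩ := decomp L' ht2
            have hcM : GoodChain M := goodchain_of_append_left hc1
            have hcM' : GoodChain M' := goodchain_of_append_left hc2
            have hlenM : M.length = M'.length := by simpa using heq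
            have hvM : zvalAux (k+2) M = zvalAux (k+2) M' := by
              rw [zvalAux_append, zvalAux_append] at hv
              simp only [zvalAux_cons, zvalAux_nil, if_pos] at hv
              rw [hlenM] at hv
              omega
            obtain ⟨S, j, hMe, hcS, heS⟩ := strip M hcM
            obtain ⟨S', j', hMe', hcS', heS'⟩ := strip M' hcM'
            have hvS : zvalAux (k+2) S = zvalAux (k+2) S' := by
              rw [hMe, hMe', zvalAux_strip, zvalAux_strip] at hvM
              exact hvM
            have hlenS : S.length ≤ N := by
              have : M.length ≤ N := by
                have := hl1; simp at this; omega
              rw [hMe] at this; simp at this; omega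
            have hlenS' : S'.length ≤ N := by
              have : M'.length ≤ N := by
                have := hl2; simp at this; omega
              rw [hMe'] at this; simp at this; omega
            have hSS : S = S' := ih S S' hlenS hlenS' hcS heS hcS' heS' k hvS
            subst hSS
            have hjj : j = j' := by
              rw [hMe, hMe'] at hlenM
              simp at hlenM
              omega
            rw [hMe, hMe', hjj]
          · have := lt_of_len_lt k L' L hc2 ht1 hgt; omega

lemma rep_mono : ∀ N : ℕ, ∀ L L' : List Bool, L.length ≤ N → L'.length ≤ N →
    GoodChain L → L.getLast? ≠ some false → GoodChain L' → L'.getLast? ≠ some false →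
    ∀ k, zvalAux (k+2) L < zvalAux (k+2) L' → zvalAux (k+3) L < zvalAux (k+3) L' := by
  intro N
  induction N with
  | zero =>
      intro L L' h1 h2 _ _ _ _ k hv
      rw [List.length_eq_zero_iff.mp (Nat.le_zero.mp h1),
        List.length_eq_zero_iff.mp (Nat.le_zero.mp h2)] at hv
      omega
  | succ N ih =>
      intro L L' hl1 hl2 hc1 he1 hc2 he2 k hv
      by_cases hL' : L' = []
      · subst hL'; simp [zvalAux_nil] at hv
      by_cases hL : L = []
      · subst hL
        have ht2 := getLast?_true_of L' hL' he2
        have := pos_of_last_true (k+1) L' ht2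
        rw [show k+1+2 = k+3 by omega] at this
        simpa [zvalAux_nil] using this
      · have ht1 := getLast?_true_of L hL he1
        have ht2 := getLast?_true_of L' hL' he2
        rcases lt_trichotomy L.length L'.length with hlt | heq | hgt
        · have := lt_of_len_lt (k+1) L L' hc1 ht2 hlt
          rw [show k+1+2 = k+3 by omega] at this
          exact this
        · obtain ⟨M, rfl⟩ := decomp L ht1
          obtain ⟨M', rfl⟩ := decomp L' ht2
          have hcM : GoodChain M := goodchain_of_append_left hc1
          have hcM' : GoodChain M' := goodchain_of_append_left hc2
          have hlenM : M.length = M'.length := by simpa using heq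
          obtain ⟨S, j, hMe, hcS, heS⟩ := strip M hcM
          obtain ⟨S', j', hMe', hcS', heS'⟩ := strip M' hcM'
          have hvS : zvalAux (k+2) S < zvalAux (k+2) S' := by
            rw [zvalAux_append, zvalAux_append] at hv
            simp only [zvalAux_cons, zvalAux_nil, if_pos] at hv
            rw [hlenM] at hv
            rw [hMe, hMe', zvalAux_strip, zvalAux_strip] at hv
            omega
          have hlenS : S.length ≤ N := by
            have : M.length ≤ N := by have := hl1; simp at this; omega
            rw [hMe] at this; simp at this; omega
          have hlenS' : S'.length ≤ N := by
            have : M'.length ≤ N := by have := hl2; simp at this; omega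
            rw [hMe'] at this; simp at this; omega
          have hS3 : zvalAux (k+3) S < zvalAux (k+3) S' :=
            ih S S' hlenS hlenS' hcS heS hcS' heS' k hvS
          rw [hMe, hMe'] at hlenM
          simp only [List.length_append, List.length_replicate] at hlenM
          rw [hMe, hMe']
          simp only [zvalAux_append, zvalAux_replicate_false, zvalAux_cons, zvalAux_nil,
            if_pos, List.length_append, List.length_replicate]
          have hfe : Nat.fib (k + 3 + (S.length + j)) = Nat.fib (k + 3 + (S'.length + j')) := by
            rw [hlenM]
          omega
        · have := lt_of_len_lt k L' L hc2 ht1 hgt; omega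

lemma le_fib_add_two : ∀ n : ℕ, n + 1 ≤ Nat.fib (n + 2) := by
  intro n
  induction n with
  | zero => simp
  | succ n ih =>
      have h1 : 0 < Nat.fib (n + 1) := Nat.fib_pos.mpr (by omega)
      have h2 : Nat.fib (n + 1 + 2) = Nat.fib (n + 1) + Nat.fib (n + 2) := by
        rw [Nat.fib_add_two]
      omega

lemma exists_fib_interval (n : ℕ) (h : 1 ≤ n) :
    ∃ k, 2 ≤ k ∧ Nat.fib k ≤ n ∧ n < Nat.fib (k + 1) := by
  set P : ℕ → Prop := fun k => Nat.fib k ≤ n with hP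
  have hdec : DecidablePred P := fun k => inferInstanceAs (Decidable (_ ≤ _))
  set k₀ := Nat.findGreatest P (n + 1) with hk₀
  have h2 : P 2 := by simp [hP, Nat.fib]; omega
  have hk2 : 2 ≤ k₀ := Nat.le_findGreatest (by omega) h2
  have hspec : P k₀ := Nat.findGreatest_spec (m := 2) (by omega) h2
  have hk₀le : k₀ ≤ n + 1 := Nat.findGreatest_le _
  refine ⟨k₀, hk2, hspec, ?_⟩
  by_contra hcon
  push_neg at hcon
  have hsucc : P (k₀ + 1) := hcon
  by_cases hb : k₀ + 1 ≤ n + 1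
  · exact absurd hsucc (Nat.findGreatest_is_greatest (by omega) hb)
  · have hk₀ : k₀ = n + 1 := by omega
    have := le_fib_add_two n
    have hmono : Nat.fib (n + 2) ≤ Nat.fib (k₀ + 1) := Nat.fib_mono (by omega)
    have : n + 1 ≤ Nat.fib (k₀ + 1) := by omega
    simp only [hP] at hsucc
    omega

lemma pad_chain : ∀ j : ℕ, GoodChain (List.replicate j false ++ [true]) := by
  intro j
  induction j with
  | zero => simp [GoodChain, List.Chain']
  | succ j ih =>
      rw [List.replicate_succ, List.cons_append]
      exact List.isChain_cons.mpr ⟨fun b _ => by simp, ih⟩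

lemma exists_rep : ∀ n : ℕ, ∃ L, GoodChain L ∧ L.getLast? ≠ some false ∧ zvalAux 2 L = n := by
  intro n
  induction n using Nat.strong_induction_on with
  | _ n ih =>
  by_cases h0 : n = 0
  · exact ⟨[], List.isChain_nil, by simp, by simp [zvalAux_nil, h0]⟩
  · obtain ⟨k, hk2, hfl, hfu⟩ := exists_fib_interval n (by omega)
    obtain ⟨m, rfl⟩ : ∃ m, k = m + 2 := ⟨k - 2, by omega⟩
    have hfibpos : 0 < Nat.fib (m + 2) := Nat.fib_pos.mpr (by omega)
    set r := n - Nat.fib (m + 2) with hr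
    obtain ⟨S, hcS, heS, hvS⟩ := ih r (by omega)
    have hfib3 : Nat.fib (m + 3) = Nat.fib (m + 1) + Nat.fib (m + 2) := by
      rw [show m + 3 = m + 1 + 2 by omega, Nat.fib_add_two, show m+1+1 = m+2 by omega]
    have hrlt : r < Nat.fib (m + 1) := by
      rw [show m + 2 + 1 = m + 3 by omega] at hfu
      omega
    have hSlen : S.length ≤ m ∧ (S ≠ [] → S.length < m) := by
      constructor
      · by_cases hS : S = []
        · simp [hS]
        · have ht := getLast?_true_of S hS heS
          have := zval_lower S ht 0
          simp only [Nat.zero_add] at this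
          rw [hvS] at this
          have hc : Nat.fib (S.length + 1) < Nat.fib (m + 1) := by omega
          by_contra hcon
          exact absurd (Nat.fib_mono (by omega : m + 1 ≤ S.length + 1)) (by omega)
      · intro hS
        have ht := getLast?_true_of S hS heS
        have := zval_lower S ht 0
        simp only [Nat.zero_add] at this
        rw [hvS] at this
        have hc : Nat.fib (S.length + 1) < Nat.fib (m + 1) := by omega
        by_contra hcon
        exact absurd (Nat.fib_mono (by omega : m + 1 ≤ S.length + 1)) (by omega)
    set j := m - S.length with hj
    refine ⟨S ++ (List.replicate j false ++ [true]), ?_, ?_, ?_⟩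
    · refine List.isChain_append.mpr ⟨hcS, pad_chain j, ?_⟩
      intro x hx y hy
      by_cases hS : S = []
      · simp [hS] at hx
      · have hj1 : 1 ≤ j := by have := hSlen.2 hS; omega
        obtain ⟨j', hjj⟩ : ∃ j', j = j' + 1 := ⟨j - 1, by omega⟩
        rw [hjj, List.replicate_succ, List.cons_append, List.head?_cons] at hy
        simp at hy
        simp [hy]
    · rw [← List.append_assoc, List.getLast?_concat]
      simp
    · rw [zvalAux_append, zvalAux_append, zvalAux_replicate_false, zvalAux_cons,
        zvalAux_nil, if_pos rfl, List.length_replicate, hvS]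
      have : 2 + S.length + j = m + 2 := by omega
      rw [this]
      omega

def VRep (L : List Bool) : Prop := GoodChain L ∧ L.getLast? ≠ some false

lemma val2_inj {L L' : List Bool} (h : VRep L) (h' : VRep L')
    (hv : zvalAux 2 L = zvalAux 2 L') : L = L' :=
  rep_unique (max L.length L'.length) L L' (le_max_left _ _) (le_max_right _ _)
    h.1 h.2 h'.1 h'.2 0 (by norm_num; exact hv)

lemma val3_inj {L L' : List Bool} (h : VRep L) (h' : VRep L')
    (hv : zvalAux 3 L = zvalAux 3 L') : L = L' :=
  rep_unique (max L.length L'.length) L L' (le_max_left _ _) (le_max_right _ _)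
    h.1 h.2 h'.1 h'.2 1 (by norm_num; exact hv)

lemma val4_inj {L L' : List Bool} (h : VRep L) (h' : VRep L')
    (hv : zvalAux 4 L = zvalAux 4 L') : L = L' :=
  rep_unique (max L.length L'.length) L L' (le_max_left _ _) (le_max_right _ _)
    h.1 h.2 h'.1 h'.2 2 (by norm_num; exact hv)

lemma mono23 {L L' : List Bool} (h : VRep L) (h' : VRep L')
    (hv : zvalAux 2 L < zvalAux 2 L') : zvalAux 3 L < zvalAux 3 L' := by
  have := rep_mono (max L.length L'.length) L L' (le_max_left _ _) (le_max_right _ _)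
    h.1 h.2 h'.1 h'.2 0 (by norm_num; exact hv)
  norm_num at this
  exact this

lemma getLast?_cons_ne_nil (d : Bool) {L : List Bool} (h : L ≠ []) :
    (d :: L).getLast? = L.getLast? := by
  cases L with
  | nil => exact absurd rfl h
  | cons e T => rw [List.getLast?_cons_cons]

def QP (a b : ℕ) : Prop := ∃ L : List Bool, GoodChain L ∧ L.getLast? = some true ∧
  a = zvalAux 3 L ∧ b = 1 + zvalAux 4 L

lemma vrep_of (L : List Bool) (hc : GoodChain L) (ht : L.getLast? = some true) :
    VRep L := ⟨hc, by rw [ht]; simp⟩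

lemma ne_nil_of_last (L : List Bool) (ht : L.getLast? = some true) : L ≠ [] := by
  intro h; rw [h] at ht; simp at ht

lemma val2_pos (L : List Bool) (ht : L.getLast? = some true) : 1 ≤ zvalAux 2 L := by
  have := pos_of_last_true 0 L ht
  norm_num at this
  omega

lemma val3_ge_two (L : List Bool) (ht : L.getLast? = some true) : 2 ≤ zvalAux 3 L := by
  have h := zval_lower L ht 1
  have hne := ne_nil_of_last L ht
  have hlen : 1 ≤ L.length := by
    cases L with
    | nil => exact absurd rfl hne
    | cons d T => simp
  have : Nat.fib 3 ≤ Nat.fib (1 + L.length + 1) := Nat.fib_mono (by omega)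
  have h3 : Nat.fib 3 = 2 := rfl
  norm_num at h ⊢
  omega

lemma val_step24 (L : List Bool) : zvalAux 4 L = zvalAux 3 L + zvalAux 2 L := by
  have := zvalAux_step L 2
  norm_num at this
  exact this

lemma vrep_false_cons (L : List Bool) (hc : GoodChain L) (ht : L.getLast? = some true) :
    VRep (false :: L) := by
  refine ⟨List.isChain_cons.mpr ⟨fun b _ => by simp, hc⟩, ?_⟩
  rw [getLast?_cons_ne_nil _ (ne_nil_of_last L ht), ht]
  simp

lemma vrep_truefalse_cons (L : List Bool) (hc : GoodChain L) (ht : L.getLast? = some true) :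
    VRep (true :: false :: L) := by
  have h1 := vrep_false_cons L hc ht
  refine ⟨List.isChain_cons.mpr ⟨fun b hb => by simp at hb; simp [hb], h1.1⟩, ?_⟩
  rw [getLast?_cons_ne_nil _ (by simp : (false :: L) ≠ [])]
  exact h1.2

lemma val2_false_cons (L : List Bool) : zvalAux 2 (false :: L) = zvalAux 3 L := by
  rw [zvalAux_cons]; norm_num

lemma val2_truefalse_cons (L : List Bool) :
    zvalAux 2 (true :: false :: L) = 1 + zvalAux 4 L := by
  rw [zvalAux_cons, zvalAux_cons]
  norm_num [Nat.fib]

lemma A_ne_B {a b a' b' : ℕ} (h : QP a b) (h' : QP a' b') : a ≠ b' := by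
  obtain ⟨L, hc, ht, ha, hb⟩ := h
  obtain ⟨L', hc', ht', ha', hb'⟩ := h'
  intro hab
  have hv : zvalAux 2 (false :: L) = zvalAux 2 (true :: false :: L') := by
    rw [val2_false_cons, val2_truefalse_cons, ← ha, ← hb', hab]
  have := val2_inj (vrep_false_cons L hc ht) (vrep_truefalse_cons L' hc' ht') hv
  simp at this

lemma QP_bounds {a b : ℕ} (h : QP a b) : 2 ≤ a ∧ a + 2 ≤ b := by
  obtain ⟨L, hc, ht, ha, hb⟩ := h
  have h1 := val3_ge_two L ht
  have h2 := val2_pos L ht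
  have h3 := val_step24 L
  omega

lemma QP_inj_a {a b a' b' : ℕ} (h : QP a b) (h' : QP a' b') (ha : a = a') : b = b' := by
  obtain ⟨L, hc, ht, rfl, rfl⟩ := h
  obtain ⟨L', hc', ht', ha', rfl⟩ := h'
  have := val3_inj (vrep_of L hc ht) (vrep_of L' hc' ht') (ha ▸ ha' ▸ rfl)
  rw [this]

lemma QP_inj_b {a b a' b' : ℕ} (h : QP a b) (h' : QP a' b') (hb : b = b') : a = a' := by
  obtain ⟨L, hc, ht, rfl, rfl⟩ := h
  obtain ⟨L', hc', ht', rfl, hb'⟩ := h'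
  have hv : zvalAux 4 L = zvalAux 4 L' := by omega
  have := val4_inj (vrep_of L hc ht) (vrep_of L' hc' ht') hv
  rw [this]

lemma QP_inj_d {a b a' b' : ℕ} (h : QP a b) (h' : QP a' b') (hd : a + b' = a' + b) :
    a = a' ∧ b = b' := by
  obtain ⟨L, hc, ht, rfl, rfl⟩ := h
  obtain ⟨L', hc', ht', rfl, rfl⟩ := h'
  have h3 := val_step24 L
  have h3' := val_step24 L'
  have hv : zvalAux 2 L = zvalAux 2 L' := by omega
  have := val2_inj (vrep_of L hc ht) (vrep_of L' hc' ht') hv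
  rw [this]
  exact ⟨rfl, rfl⟩

def Qset : Set (ℕ × ℕ) := {p | p.1 + p.2 ≤ 1 ∨ QP p.1 p.2 ∨ QP p.2 p.1}

lemma Qset_symm {x y : ℕ} (h : (x, y) ∈ Qset) : (y, x) ∈ Qset := by
  rcases h with h | h | h
  · left; simp at h ⊢; omega
  · right; right; exact h
  · right; left; exact h

lemma K1Move_swap {p q : ℕ × ℕ} (h : K1Move p q) :
    K1Move (p.2, p.1) (q.2, q.1) := by
  obtain ⟨h1, h2⟩ := h
  refine ⟨by simp; omega, ?_⟩
  simp only
  rcases h2 with ⟨ha, hb⟩ | ⟨ha, hb⟩ | ⟨ha, hb, hc⟩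
  · right; left; exact ⟨hb, ha⟩
  · left; exact ⟨hb, ha⟩
  · right; right; exact ⟨hb, ha, hc.symm⟩

lemma no_move_from_QP {a b : ℕ} (h : QP a b) {q : ℕ × ℕ} (hq : q ∈ Qset) :
    ¬ K1Move (a, b) q := by
  intro hm
  obtain ⟨hab1, hab2⟩ := QP_bounds h
  obtain ⟨_, hmv⟩ := hm
  simp only at hmv
  rcases hq with hterm | hq' | hq''
  · rcases hmv with ⟨h1, h2⟩ | ⟨h1, h2⟩ | ⟨h1, h2, h3⟩  <;> omega
  · obtain ⟨hb1, hb2⟩ := QP_bounds hq'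
    rcases hmv with ⟨h1, h2⟩ | ⟨h1, h2⟩ | ⟨h1, h2, h3⟩
    · have := QP_inj_a h hq' h1.symm; omega
    · have := QP_inj_b h hq' h2.symm; omega
    · have hd : a + q.2 = q.1 + b := by omega
      have := (QP_inj_d h hq' hd).1
      omega
  · obtain ⟨hb1, hb2⟩ := QP_bounds hq''
    rcases hmv with ⟨h1, h2⟩ | ⟨h1, h2⟩ | ⟨h1, h2, h3⟩
    · exact A_ne_B h hq'' h1.symm
    · exact A_ne_B hq'' h h2
    · omega

lemma Qstable : ∀ p ∈ Qset, ∀ q ∈ Qset, ¬ K1Move p q := by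
  intro p hp q hq hm
  have hnt : 1 < p.1 + p.2 := hm.1
  rcases hp with hterm | hp' | hp''
  · omega
  · exact no_move_from_QP hp' hq hm
  · have hm' : K1Move (p.2, p.1) (q.2, q.1) := K1Move_swap hm
    exact no_move_from_QP hp'' (Qset_symm (by simpa using hq)) hm'

lemma head_cases {x : ℕ} (hx : 2 ≤ x) :
    ∃ L, GoodChain L ∧ L.getLast? = some true ∧
      (x = zvalAux 3 L ∨ x = 1 + zvalAux 4 L) := by
  obtain ⟨R, hcR, heR, hvR⟩ := exists_rep x
  have hRne : R ≠ [] := by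
    intro h; rw [h, zvalAux_nil] at hvR; omega
  have htR := getLast?_true_of R hRne heR
  cases R with
  | nil => exact absurd rfl hRne
  | cons d T =>
    cases d with
    | false =>
        have hTne : T ≠ [] := by
          intro h; rw [h] at htR; simp at htR
        refine ⟨T, (List.isChain_cons.mp hcR).2, ?_, Or.inl ?_⟩
        · rw [← getLast?_cons_ne_nil false hTne]; exact htR
        · rw [← hvR, val2_false_cons]
    | true =>
        cases T with
        | nil =>
            rw [zvalAux_cons, zvalAux_nil] at hvR
            simp [Nat.fib] at hvR
            omega
        | cons e T' =>
            have he : e = false := by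
              have := List.isChain_cons_cons.mp hcR
              rcases e with _|_
              · rfl
              · exact absurd ⟨rfl, rfl⟩ this.1
            subst he
            have hT'ne : T' ≠ [] := by
              intro h; rw [h] at htR; simp at htR
            refine ⟨T', ?_, ?_, Or.inr ?_⟩
            · exact (List.isChain_cons.mp (List.isChain_cons.mp hcR).2).2
            · rw [← getLast?_cons_ne_nil false hT'ne,
                ← getLast?_cons_ne_nil true (by simp : (false :: T') ≠ [])]
              exact htR
            · rw [← hvR, val2_truefalse_cons]

lemma QP_mk (L : List Bool) (hc : GoodChain L) (ht : L.getLast? = some true) :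
    QP (zvalAux 3 L) (1 + zvalAux 4 L) := ⟨L, hc, ht, rfl, rfl⟩

lemma Qabsorb_le {x y : ℕ} (hxy : x ≤ y) (hv : (x, y) ∉ Qset) :
    ∃ p ∈ Qset, K1Move (x, y) p := by
  have hnt : 2 ≤ x + y := by
    by_contra h
    exact hv (Or.inl (by simp; omega))
  have hnQ1 : ¬ QP x y := fun h => hv (Or.inr (Or.inl h))
  rcases Nat.lt_or_ge x 2 with hx2 | hx2
  · rcases Nat.lt_or_ge x 1 with hx0 | hx1
    · -- x = 0, y ≥ 2
      refine ⟨(0, 1), Or.inl (by simp), ⟨by simp; omega, Or.inl ⟨by omega, by simp; omega⟩⟩⟩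
    · -- x = 1
      refine ⟨(1, 0), Or.inl (by simp), ⟨by simp; omega, Or.inl ⟨by omega, by simp; omega⟩⟩⟩
  · obtain ⟨L, hc, ht, hAB⟩ := head_cases hx2
    rcases hAB with hA | hB
    · -- x is an A-number
      have hQP : QP x (1 + zvalAux 4 L) := hA ▸ QP_mk L hc ht
      set b := 1 + zvalAux 4 L with hb
      have hstep := val_step24 L
      have hd1 := val2_pos L ht
      rcases Nat.lt_trichotomy y b with hyb | hyb | hyb
      · -- y < b : diagonal moves
        set k := y - x with hk
        rcases Nat.lt_or_ge k 2 with hk2 | hk2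
        · rcases Nat.lt_or_ge k 1 with hk0 | hk1
          · -- k = 0 : move to (0,0)
            exact ⟨(0, 0), Or.inl (by simp),
              ⟨by simp; omega, Or.inr (Or.inr ⟨by simp; omega, by simp; omega, by simp; omega⟩)⟩⟩
          · -- k = 1 : move to (0,1)
            exact ⟨(0, 1), Or.inl (by simp),
              ⟨by simp; omega, Or.inr (Or.inr ⟨by simp; omega, by simp; omega, by simp; omega⟩)⟩⟩
        · -- k ≥ 2
          obtain ⟨S, hcS, heS, hvS⟩ := exists_rep (k - 1)
          have hSne : S ≠ [] := by
            intro h; rw [h, zvalAux_nil] at hvS; omega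
          have htS := getLast?_true_of S hSne heS
          have hQS : QP (zvalAux 3 S) (1 + zvalAux 4 S) := QP_mk S hcS htS
          have hstepS := val_step24 S
          have hlt : zvalAux 3 S < zvalAux 3 L := by
            apply mono23 (vrep_of S hcS htS) (vrep_of L hc ht)
            omega
          refine ⟨(zvalAux 3 S, 1 + zvalAux 4 S), Or.inr (Or.inl hQS), ⟨by simp; omega, ?_⟩⟩
          exact Or.inr (Or.inr ⟨by simp; omega, by simp; omega, by simp; omega⟩)
      · exact absurd (hyb ▸ hQP) hnQ1
      · -- y > b : vertical move to (x, b)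
        have hbx := QP_bounds hQP
        exact ⟨(x, b), Or.inr (Or.inl hQP), ⟨by simp; omega, Or.inl ⟨rfl, by simp; omega⟩⟩⟩
    · -- x is a B-number : move to (x, zvalAux 3 L)
      have hQP : QP (zvalAux 3 L) x := by
        rw [hB]; exact QP_mk L hc ht
      have hbd := QP_bounds hQP
      exact ⟨(x, zvalAux 3 L), Or.inr (Or.inr hQP), ⟨by simp; omega, Or.inl ⟨rfl, by simp; omega⟩⟩⟩

lemma Qabsorb : ∀ v : ℕ × ℕ, v ∉ Qset → ∃ p ∈ Qset, K1Move v p := by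
  intro v hv
  rcases le_or_gt v.1 v.2 with h | h
  · have := Qabsorb_le h (by rwa [show (v.1, v.2) = v from rfl])
    rwa [show (v.1, v.2) = v from rfl] at this
  · have hv' : (v.2, v.1) ∉ Qset := fun h' => hv (by simpa using Qset_symm h')
    obtain ⟨p, hp, hm⟩ := Qabsorb_le (Nat.le_of_lt h) hv'
    refine ⟨(p.2, p.1), Qset_symm (by simpa using hp), ?_⟩
    have := K1Move_swap hm
    simpa using this

lemma move_decreases {p q : ℕ × ℕ} (h : K1Move p q) : q.1 + q.2 < p.1 + p.2 := by
  obtain ⟨_, hm⟩ := h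
  rcases hm with ⟨h1, h2⟩ | ⟨h1, h2⟩ | ⟨h1, h2, _⟩ <;> omega

lemma P_eq_Q (P : Set (ℕ × ℕ))
    (hstable : ∀ p ∈ P, ∀ q ∈ P, ¬ K1Move p q)
    (habsorbing : ∀ v : ℕ × ℕ, v ∉ P → ∃ p ∈ P, K1Move v p) :
    ∀ p, p ∈ P ↔ p ∈ Qset := by
  have key : ∀ s : ℕ, ∀ p : ℕ × ℕ, p.1 + p.2 ≤ s → (p ∈ P ↔ p ∈ Qset) := by
    intro s
    induction s with
    | zero =>
        intro p hp
        have hterm : p.1 + p.2 ≤ 1 := by omega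
        have hP : p ∈ P := by
          by_contra hP
          obtain ⟨q, _, hm⟩ := habsorbing p hP
          exact absurd hm.1 (by omega)
        exact iff_of_true hP (Or.inl hterm)
    | succ s ih =>
        intro p hp
        by_cases hterm : p.1 + p.2 ≤ 1
        · have hP : p ∈ P := by
            by_contra hP
            obtain ⟨q, _, hm⟩ := habsorbing p hP
            exact absurd hm.1 (by omega)
          exact iff_of_true hP (Or.inl hterm)
        · have hmoves : ∀ q : ℕ × ℕ, K1Move p q → (q ∈ P ↔ q ∈ Qset) := by
            intro q hm
            exact ih q (by have := move_decreases hm; omega)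
          constructor
          · intro hP
            by_contra hQ
            obtain ⟨q, hq, hm⟩ := Qabsorb p hQ
            exact hstable p hP q ((hmoves q hm).mpr hq) hm
          · intro hQ
            by_contra hP
            obtain ⟨q, hq, hm⟩ := habsorbing p hP
            exact Qstable p hQ q ((hmoves q hm).mp hq) hm
  exact fun p => key (p.1 + p.2) p le_rfl

theorem K1_ppositions (P : Set (ℕ × ℕ))
    (hstable : ∀ p ∈ P, ∀ q ∈ P, ¬ K1Move p q)
    (habsorbing : ∀ v : ℕ × ℕ, v ∉ P → ∃ p ∈ P, K1Move v p)
    (a b : ℕ) (hab : a ≤ b) (hsum : 2 ≤ a + b) :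
    (a, b) ∈ P ↔
      ∃ L : List Bool, ZeckRep a (false :: L) ∧ ZeckRep b (true :: false :: L) := by
  rw [P_eq_Q P hstable habsorbing (a, b)]
  constructor
  · intro hQ
    rcases hQ with hterm | hQP | hQP'
    · simp at hterm; omega
    · obtain ⟨L, hc, ht, ha, hb⟩ := hQP
      simp only at ha hb
      refine ⟨L, ⟨?_, ?_, ?_⟩, ⟨?_, ?_, ?_⟩⟩
      · rw [show zval (false :: L) = zvalAux 2 (false :: L) from rfl, val2_false_cons, ← ha]
      · exact (vrep_false_cons L hc ht).1
      · exact (vrep_false_cons L hc ht).2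
      · rw [show zval (true :: false :: L) = zvalAux 2 (true :: false :: L) from rfl,
          val2_truefalse_cons, ← hb]
      · exact (vrep_truefalse_cons L hc ht).1
      · exact (vrep_truefalse_cons L hc ht).2
    · obtain ⟨h1, h2⟩ := QP_bounds hQP'
      omega
  · rintro ⟨L, ⟨hva, hca, hea⟩, ⟨hvb, _, _⟩⟩
    have hLne : L ≠ [] := by
      intro h; rw [h] at hea; simp at hea
    have hcL : GoodChain L := (List.isChain_cons.mp hca).2
    have htL : L.getLast? = some true := by
      apply getLast?_true_of L hLne
      rwa [getLast?_cons_ne_nil false hLne] at hea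
    refine Or.inr (Or.inl ⟨L, hcL, htL, ?_, ?_⟩)
    · rw [← hva, show zval (false :: L) = zvalAux 2 (false :: L) from rfl, val2_false_cons]
    · rw [← hvb, show zval (true :: false :: L) = zvalAux 2 (true :: false :: L) from rfl,
        val2_truefalse_cons]
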